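/- arXiv:2012.02758 — 2 statements merged into one kernel-verified Lean document; each statement's English description precedes it below -/
import Mathlib

section
/- Let A_Γ = ⟨a_σ : σ ∈ Γ⟩ be a T-algebra and let U be any ultrafilter on the Boolean subalgebra B_Γ of P(ℕ) generated by {a_σ : σ ∈ Γ}. Then there exists y ∈ X(Γ) such that U = U_y, where U_y is the ultrafilter on B_Γ generated by the finite intersections of {ℕ ∖ a_{y↾(α+1)} : α+1 ≤ λ_y}. -/
open Set

noncomputable section

/-- The least uncountable ordinal `ω₁`. -/
def omega1 : Ordinal := (Cardinal.aleph 1).ord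

/-- `⋃_{γ ∈ F} a_γ` for a finite set `F` of indices. -/
def unionFin (a : Ordinal → Set ℕ) (F : Finset Ordinal) : Set ℕ :=
  ⋃ γ ∈ F, a γ

/-- A sequence of subsets of `ℕ`, with indices from a (downward closed) domain `D`
of ordinals, is coherent if for all `α ≤ β` in the domain there is a finite `F ⊆ α`
with `a α ∩ a β ⊆ ⋃_{γ∈F} a γ` or `a α ⊆ a β ∪ ⋃_{γ∈F} a γ`. -/
def CoherentOn (D : Set Ordinal) (a : Ordinal → Set ℕ) : Prop :=
  ∀ α β : Ordinal, α ≤ β → β ∈ D →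
    ∃ F : Finset Ordinal, (∀ γ ∈ F, γ < α) ∧
      (a α ∩ a β ⊆ unionFin a F ∨ a α ⊆ a β ∪ unionFin a F)

/-- Properness: no `a β` is contained in a finite union of earlier terms. -/
def ProperOn (D : Set Ordinal) (a : Ordinal → Set ℕ) : Prop :=
  ∀ β ∈ D, ∀ F : Finset Ordinal, (∀ γ ∈ F, γ < β) → ¬ a β ⊆ unionFin a F

/-- `â_β = { α ≤ β : a α ∖ a β ⊆ ⋃_{γ∈F} a γ for some finite F ⊆ α }`. -/
def hatA (a : Ordinal → Set ℕ) (β : Ordinal) : Set Ordinal :=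
  { α | α ≤ β ∧ ∃ F : Finset Ordinal, (∀ γ ∈ F, γ < α) ∧ a α \ a β ⊆ unionFin a F }

/-- The topology `τ(A)` on `λ + 1 = {α : α ≤ λ}` generated by the subbase
consisting of the sets `â_β` and their complements, `β < λ`. -/
def tau (lam : Ordinal) (a : Ordinal → Set ℕ) :
    TopologicalSpace {α : Ordinal // α ≤ lam} :=
  TopologicalSpace.generateFrom
    { s | ∃ β < lam, s = {x : {α : Ordinal // α ≤ lam} | x.1 ∈ hatA a β} ∨
                     s = {x : {α : Ordinal // α ≤ lam} | x.1 ∈ hatA a β}ᶜ }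

/-- The subspace `ω₁ = {α : α < ω₁}` of `(ω₁+1, τ(A))`. -/
def tauSub (a : Ordinal → Set ℕ) : TopologicalSpace {y : Ordinal // y < omega1} :=
  TopologicalSpace.induced
    (fun y : {y : Ordinal // y < omega1} => (⟨y.1, y.2.le⟩ : {α : Ordinal // α ≤ omega1}))
    (tau omega1 a)

/-- Closed unbounded subsets of `ω₁`. -/
def IsClub' (C : Set Ordinal) : Prop :=
  C ⊆ Iio omega1 ∧
  (∀ α < omega1, ∃ β ∈ C, α ≤ β) ∧
  (∀ δ, δ < omega1 → δ ≠ 0 → (∀ α < δ, ∃ β ∈ C, α < β ∧ β < δ) → δ ∈ C)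

/-- Stationary subsets of `ω₁`: sets meeting every club. -/
def IsStationary' (S : Set Ordinal) : Prop :=
  ∀ C : Set Ordinal, IsClub' C → (S ∩ C).Nonempty

/-- The stationary covering property for a coherent sequence whose index domain is `D`:
if the sequence has length `ω₁` (i.e. `Iio ω₁ ⊆ D`), then every stationary `S ⊆ ω₁`
together with some finite `F` covers, i.e. `⋃_{γ ∈ S ∪ F} â_γ = ω₁`.  (Sequences of
length `< ω₁` have the ScP by convention.) -/
def HasScP (D : Set Ordinal) (a : Ordinal → Set ℕ) : Prop :=
  Iio omega1 ⊆ D →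
    ∀ S : Set Ordinal, S ⊆ Iio omega1 → IsStationary' S →
      ∃ F : Finset Ordinal, (⋃ γ ∈ S ∪ (↑F : Set Ordinal), hatA a γ) = Iio omega1

/-- A node of the tree `2^{≤ω₁}`: a function `val` defined on the ordinals `< len`
(with the canonical value `false` beyond `len`). -/
structure Node where
  len : Ordinal
  val : Ordinal → Bool
  canon : ∀ α, len ≤ α → val α = false

open Classical in
/-- The restriction `x ↾ β`. -/
def Node.restrict (x : Node) (β : Ordinal) : Node where
  len := β
  val := fun α => if α < β then x.val α else false
  canon := fun α h => if_neg (not_lt.2 h)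

/-- `τ.Extends σ` means `σ ⊆ τ`, i.e. `τ` extends `σ`. -/
def Node.Extends (τ σ : Node) : Prop :=
  σ.len ≤ τ.len ∧ ∀ α < σ.len, τ.val α = σ.val α

/-- Successor ordinals. -/
def IsSucc (o : Ordinal) : Prop := ∃ β, o = β + 1

open Classical in
/-- `σ†`: if `σ` has successor length `β+1`, the node agreeing with `σ` except at `β`;
otherwise `σ` itself. -/
def Node.dagger (σ : Node) : Node :=
  if h : IsSucc σ.len then
    { len := σ.len
      val := fun α => if α = Classical.choose h then !(σ.val α) else σ.val α
      canon := by
        intro α hα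
        have hs := Classical.choose_spec h
        have hne : α ≠ Classical.choose h := by
          intro he
          rw [hs, he] at hα
          rw [Ordinal.add_one_eq_succ] at hα
          exact absurd hα (not_le.2 (Order.lt_succ (Classical.choose h)))
        show (if α = Classical.choose h then !(σ.val α) else σ.val α) = false
        rw [if_neg hne]
        exact σ.canon α hα }
  else σ

open Classical in
/-- `σ ⌢ b` : the node `σ` extended by one value `b`. -/
def Node.snoc (σ : Node) (b : Bool) : Node where
  len := σ.len + 1
  val := fun α => if α = σ.len then b else σ.val α
  canon := by
    intro α hα
    have h1 : σ.len < α := by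
      have h2 : σ.len < σ.len + 1 := by
        rw [Ordinal.add_one_eq_succ]; exact Order.lt_succ σ.len
      exact lt_of_lt_of_le h2 hα
    show (if α = σ.len then b else σ.val α) = false
    rw [if_neg h1.ne']
    exact σ.canon α h1.le

open Classical in
/-- `x ⌢ σ` : concatenation of nodes. -/
def Node.append (x σ : Node) : Node where
  len := x.len + σ.len
  val := fun α => if α < x.len then x.val α else σ.val (α - x.len)
  canon := by
    intro α hα
    have h1 : ¬ α < x.len := not_lt.2 (le_trans (le_self_add : x.len ≤ x.len + σ.len) hα)
    show (if α < x.len then x.val α else σ.val (α - x.len)) = false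
    rw [if_neg h1]
    apply σ.canon
    by_contra h2
    rw [not_le] at h2
    have h3 : α ≤ x.len + (α - x.len) := Ordinal.le_add_sub α x.len
    have h4 : x.len + (α - x.len) < x.len + σ.len := by gcongr
    exact absurd hα (not_le.2 (lt_of_le_of_lt h3 h4))

/-- A subtree of `2^{<ω₁}` that is downward closed, twinned and has no maximal elements. -/
structure GoodTree (Γ : Set Node) : Prop where
  lt_omega1 : ∀ σ ∈ Γ, σ.len < omega1
  downward : ∀ σ ∈ Γ, ∀ β ≤ σ.len, σ.restrict β ∈ Γ
  twinned : ∀ σ ∈ Γ, σ.dagger ∈ Γ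
  noMax : ∀ σ ∈ Γ, ∃ τ ∈ Γ, σ.len < τ.len ∧ τ.Extends σ

/-- `X(Γ)`: the maximal branches of `Γ`, i.e. the minimal elements of `2^{≤ω₁} ∖ Γ`. -/
def XGamma (Γ : Set Node) : Set Node :=
  { x | x.len ≤ omega1 ∧ x ∉ Γ ∧ ∀ β < x.len, x.restrict β ∈ Γ }

/-- The index domain of the branch sequence `A_{Γ,x}`. -/
def branchDomain (Γ : Set Node) (x : Node) : Set Ordinal :=
  { α | α + 1 ≤ x.len ∧ x.restrict (α + 1) ∈ Γ }

/-- The branch sequence `A_{Γ,x}`, `a^x_α = a_{x ↾ (α+1)}`. -/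
def branchSeq (a : Node → Set ℕ) (x : Node) : Ordinal → Set ℕ :=
  fun α => a (x.restrict (α + 1))

/-- A `𝕋`-algebra on the tree `Γ`. -/
structure IsTAlgebra (Γ : Set Node) (a : Node → Set ℕ) : Prop where
  tree : GoodTree Γ
  empty_of_not_succ : ∀ σ ∈ Γ, ¬ IsSucc σ.len → a σ = ∅
  compl_dagger : ∀ σ ∈ Γ, IsSucc σ.len → a σ.dagger = (a σ)ᶜ
  branch_coherent : ∀ x : Node, x.len ≤ omega1 →
    CoherentOn (branchDomain Γ x) (branchSeq a x)
  branch_proper : ∀ x : Node, x.len ≤ omega1 →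
    ProperOn (branchDomain Γ x) (branchSeq a x)

/-- The Boolean subalgebra of `P(ℕ)` generated by a family `G`. -/
inductive GenBool (G : Set (Set ℕ)) : Set ℕ → Prop
  | basic (s : Set ℕ) : s ∈ G → GenBool G s
  | empty : GenBool G ∅
  | compl (s : Set ℕ) : GenBool G s → GenBool G sᶜ
  | inter (s t : Set ℕ) : GenBool G s → GenBool G t → GenBool G (s ∩ t)

/-- `B_Γ`: the Boolean subalgebra of `P(ℕ)` generated by `{a_σ : σ ∈ Γ}`. -/
def BGamma (Γ : Set Node) (a : Node → Set ℕ) : Set (Set ℕ) :=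
  { b | GenBool { s | ∃ σ ∈ Γ, s = a σ } b }

/-- A finite intersection from the family `{ℕ ∖ a_{x↾(α+1)} : α + 1 ≤ λ_x}`. -/
def finInterCompl (a : Node → Set ℕ) (x : Node) (F : Finset Ordinal) : Set ℕ :=
  ⋂ α ∈ F, (a (x.restrict (α + 1)))ᶜ

/-- The ultrafilter `U_x` on `B_Γ` generated by the finite intersections of
`{ℕ ∖ a_{x↾(α+1)} : α + 1 ≤ λ_x}`. -/
def Ux (Γ : Set Node) (a : Node → Set ℕ) (x : Node) : Set (Set ℕ) :=
  { b | b ∈ BGamma Γ a ∧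
    ∃ F : Finset Ordinal, (∀ α ∈ F, α + 1 ≤ x.len) ∧ finInterCompl a x F ⊆ b }

/-- The Stone topology on `X(Γ)`, with subbasic open sets `{z : b ∈ U_z}`, `b ∈ B_Γ`. -/
def stoneTop (Γ : Set Node) (a : Node → Set ℕ) :
    TopologicalSpace {z : Node // z ∈ XGamma Γ} :=
  TopologicalSpace.generateFrom
    { s | ∃ b ∈ BGamma Γ a, s = { z : {z : Node // z ∈ XGamma Γ} | b ∈ Ux Γ a z.1 } }

/-- An ultrafilter on a Boolean subalgebra `B` of `P(ℕ)`. -/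
def IsUltrafilterOn (B U : Set (Set ℕ)) : Prop :=
  U ⊆ B ∧
  (∀ s ∈ U, ∀ t ∈ U, s ∩ t ∈ U) ∧
  (∀ s ∈ U, ∀ t ∈ B, s ⊆ t → t ∈ U) ∧
  ∅ ∉ U ∧
  (∀ b ∈ B, Xor' (b ∈ U) (bᶜ ∈ U))

/-- The length-lexicographic (strict) order on finite binary strings. -/
def LenLexLT (σ τ : Node) : Prop :=
  σ.len < τ.len ∨ (σ.len = τ.len ∧ ∃ i < σ.len, σ.val i = false ∧ τ.val i = true ∧
    ∀ j < i, σ.val j = τ.val j)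

/-- `e` is the standard length-lexicographic enumeration of `2^{<ω}`. -/
def IsStdEnum (e : ℕ → Node) : Prop :=
  (∀ k, (e k).len < Ordinal.omega0) ∧
  (∀ σ : Node, σ.len < Ordinal.omega0 → ∃ k, e k = σ) ∧
  (∀ k l : ℕ, k < l → LenLexLT (e k) (e l))

/-- `⋃_{k<n} c^x_k` where `c^x_n = a^x_{e(n)} ∖ ⋃_{k<n} c^x_k` (recursively). -/
def cUnion (a : Node → Set ℕ) (x : Node) (eb : ℕ → Ordinal) : ℕ → Set ℕ
  | 0 => ∅
  | n + 1 => cUnion a x eb n ∪ (a (x.restrict (eb n + 1)) \ cUnion a x eb n)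

/-- `c^x_n = a^x_{e(n)} ∖ ⋃_{k<n} c^x_k`. -/
def cSeq (a : Node → Set ℕ) (x : Node) (eb : ℕ → Ordinal) (n : ℕ) : Set ℕ :=
  a (x.restrict (eb n + 1)) \ cUnion a x eb n

/-- `{x ⌢ σ : σ ∈ 2^{<ω}}`. -/
def appendSet (x : Node) : Set Node :=
  { τ | ∃ σ : Node, σ.len < Ordinal.omega0 ∧ τ = x.append σ }

/-- The defining equations of the extension `A_Γ[π,x]`:
`a_x = ∅`, `a_{x⌢(σ⌢0)} = ⋃{c^x_k : σ⌢1 ⊆ σ_{π(k)}}`, `a_{x⌢(σ⌢1)} = ℕ ∖ a_{x⌢(σ⌢0)}`. -/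
def ExtEquations (e : ℕ → Node) (π : ℕ → ℕ) (a : Node → Set ℕ) (x : Node)
    (eb : ℕ → Ordinal) (a' : Node → Set ℕ) : Prop :=
  a' x = ∅ ∧
  ∀ σ : Node, σ.len < Ordinal.omega0 →
    (a' (x.append (σ.snoc false)) =
      ⋃ k ∈ { k : ℕ | (e (π k)).Extends (σ.snoc true) }, cSeq a x eb k) ∧
    (a' (x.append (σ.snoc true)) = (a' (x.append (σ.snoc false)))ᶜ)

/-- The full tree `2^{<ω₁}`. -/
def GammaFull : Set Node := { σ | σ.len < omega1 }

theorem natLtOmega1 (n : ℕ) : (n : Ordinal) < omega1 := by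
  have h1 : (n : Ordinal) < Ordinal.omega0 := Ordinal.nat_lt_omega0 n
  have h2 : Ordinal.omega0 < omega1 := by
    rw [omega1, ← Cardinal.ord_aleph0]
    exact Cardinal.ord_lt_ord.2 (by rw [← Cardinal.aleph_zero]
                                    exact Cardinal.aleph_lt_aleph.2 zero_lt_one)
  exact h1.trans h2


namespace Stmt4Aux

lemma node_ext {x y : Node} (h1 : x.len = y.len)
    (h2 : ∀ α, α < x.len → x.val α = y.val α) : x = y := by
  obtain ⟨lx, vx, cx⟩ := x
  obtain ⟨ly, vy, cy⟩ := y
  simp only at h1 h2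
  subst h1
  have hv : vx = vy := by
    funext α
    by_cases h : α < lx
    · exact h2 α h
    · rw [cx α (not_lt.1 h), cy α (not_lt.1 h)]
  subst hv
  rfl

lemma restrict_val (x : Node) (β α : Ordinal) (h : α < β) :
    (x.restrict β).val α = x.val α := if_pos h

lemma restrict_self (x : Node) : x.restrict x.len = x := by
  apply node_ext
  · rfl
  · intro α h
    exact restrict_val x _ α h

lemma lt_succ_self (α : Ordinal) : α < α + 1 := by
  rw [Ordinal.add_one_eq_succ]; exact Order.lt_succ α

lemma lt_succ_iff' {α β : Ordinal} : α < β + 1 ↔ α ≤ β := by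
  rw [Ordinal.add_one_eq_succ]; exact Order.lt_succ_iff

lemma succ_le_iff' {α β : Ordinal} : α + 1 ≤ β ↔ α < β := by
  rw [Ordinal.add_one_eq_succ]; exact Order.succ_le_iff

lemma succ_inj' {α β : Ordinal} (h : α + 1 = β + 1) : α = β :=
  le_antisymm (lt_succ_iff'.1 (h ▸ lt_succ_self α)) (lt_succ_iff'.1 (h ▸ lt_succ_self β))

lemma dagger_len_val {τ : Node} {δ : Ordinal} (h : τ.len = δ + 1) :
    τ.dagger.len = τ.len ∧ ∀ α, τ.dagger.val α = if α = δ then !(τ.val α) else τ.val α := by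
  have hs : IsSucc τ.len := ⟨δ, h⟩
  have hch : Classical.choose hs = δ := by
    have hcs := Classical.choose_spec hs
    exact succ_inj' (by rw [← hcs, ← h])
  unfold Node.dagger
  rw [dif_pos hs]
  exact ⟨rfl, fun α => by simp only [hch]⟩

lemma eq_dagger {τ σ : Node} {δ : Ordinal} (hτ : τ.len = δ + 1) (hσ : σ.len = δ + 1)
    (hd : σ.val δ = !(τ.val δ)) (hag : ∀ α, α < δ → σ.val α = τ.val α) : σ = τ.dagger := by
  obtain ⟨hl, hv⟩ := dagger_len_val hτ
  apply node_ext (by rw [hσ, hl, hτ])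
  intro α hα
  rw [hv α]
  rw [hσ] at hα
  rcases eq_or_lt_of_le (lt_succ_iff'.1 hα) with he | hlt
  · subst he; rw [if_pos rfl]; exact hd
  · rw [if_neg hlt.ne]; exact hag α hlt

lemma mem_finInterCompl {a : Node → Set ℕ} {y : Node} {F : Finset Ordinal} {n : ℕ} :
    n ∈ finInterCompl a y F ↔ ∀ α ∈ F, n ∉ a (y.restrict (α + 1)) := by
  simp [finInterCompl]
def compat (Γ : Set Node) (a : Node → Set ℕ) (U : Set (Set ℕ)) : Set Node :=
  { σ | σ ∈ Γ ∧ ∀ α, α + 1 ≤ σ.len → (a (σ.restrict (α + 1)))ᶜ ∈ U }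

lemma exists_child {Γ : Set Node} {a : Node → Set ℕ} (hT : IsTAlgebra Γ a)
    {U : Set (Set ℕ)} (hU : IsUltrafilterOn (BGamma Γ a) U)
    {σ : Node} (hσ : σ ∈ Γ) :
    ∃ τ ∈ Γ, τ.len = σ.len + 1 ∧ (∀ α, α < σ.len → τ.val α = σ.val α) ∧ (a τ)ᶜ ∈ U := by
  obtain ⟨ρ, hρ, hlen, hext⟩ := hT.tree.noMax σ hσ
  set c := ρ.restrict (σ.len + 1) with hc
  have hcΓ : c ∈ Γ := hT.tree.downward ρ hρ _ (succ_le_iff'.2 hlen)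
  have hclen : c.len = σ.len + 1 := rfl
  have hcval : ∀ α, α < σ.len → c.val α = σ.val α := fun α h => by
    rw [hc, restrict_val _ _ _ (h.trans (lt_succ_self _))]
    exact hext.2 α h
  have hcB : a c ∈ BGamma Γ a := GenBool.basic _ ⟨c, hcΓ, rfl⟩
  rcases hU.2.2.2.2 (a c) hcB with ⟨hin, _⟩ | ⟨hcomp, _⟩
  · refine ⟨c.dagger, hT.tree.twinned c hcΓ, ?_, ?_, ?_⟩
    · rw [(dagger_len_val hclen).1, hclen]
    · intro α h
      rw [(dagger_len_val hclen).2 α, if_neg h.ne]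
      exact hcval α h
    · rw [hT.compl_dagger c hcΓ ⟨σ.len, hclen⟩, compl_compl]
      exact hin
  · exact ⟨c, hcΓ, hclen, hcval, hcomp⟩

lemma compat_child {Γ : Set Node} {a : Node → Set ℕ} (hT : IsTAlgebra Γ a)
    {U : Set (Set ℕ)} (hU : IsUltrafilterOn (BGamma Γ a) U)
    {σ : Node} (hσ : σ ∈ compat Γ a U) :
    ∃ τ ∈ compat Γ a U, τ.len = σ.len + 1 := by
  obtain ⟨τ, hτΓ, hlen, hval, hcomp⟩ := exists_child hT hU hσ.1
  refine ⟨τ, ⟨hτΓ, ?_⟩, hlen⟩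
  intro α hα
  rw [hlen] at hα
  rcases eq_or_lt_of_le hα with he | hlt
  · have hres : τ.restrict (α + 1) = τ := by
      have : τ.len = α + 1 := by rw [hlen, he]
      rw [← this]; exact restrict_self τ
    rw [hres]; exact hcomp
  · have h1 : α + 1 ≤ σ.len := lt_succ_iff'.1 hlt
    have hres : τ.restrict (α + 1) = σ.restrict (α + 1) := by
      apply node_ext
      · rfl
      · intro β hβ
        have hβ' : β < α + 1 := hβ
        rw [restrict_val _ _ _ hβ', restrict_val _ _ _ hβ']
        exact hval β (lt_of_lt_of_le hβ h1)
    rw [hres]; exact hσ.2 α h1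

lemma compat_agree {Γ : Set Node} {a : Node → Set ℕ} (hT : IsTAlgebra Γ a)
    {U : Set (Set ℕ)} (hU : IsUltrafilterOn (BGamma Γ a) U)
    {σ τ : Node} (hσ : σ ∈ compat Γ a U) (hτ : τ ∈ compat Γ a U)
    {α : Ordinal} (h1 : α < σ.len) (h2 : α < τ.len) : σ.val α = τ.val α := by
  by_contra hne
  have hD : {δ : Ordinal | δ < σ.len ∧ δ < τ.len ∧ σ.val δ ≠ τ.val δ}.Nonempty :=
    ⟨α, h1, h2, hne⟩
  set D := {δ : Ordinal | δ < σ.len ∧ δ < τ.len ∧ σ.val δ ≠ τ.val δ} with hDdef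
  obtain ⟨hδ1, hδ2, hδ3⟩ : Ordinal.lt_wf.min D hD ∈ D := Ordinal.lt_wf.min_mem D hD
  set δ := Ordinal.lt_wf.min D hD with hδdef
  have hag : ∀ γ, γ < δ → σ.val γ = τ.val γ := by
    intro γ hγ
    by_contra hne'
    exact Ordinal.lt_wf.not_lt_min D ⟨hγ.trans hδ1, hγ.trans hδ2, hne'⟩ hγ
  have hsucc1 : δ + 1 ≤ σ.len := succ_le_iff'.2 hδ1
  have hsucc2 : δ + 1 ≤ τ.len := succ_le_iff'.2 hδ2
  have hdag : σ.restrict (δ + 1) = (τ.restrict (δ + 1)).dagger := by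
    apply eq_dagger rfl rfl
    · rw [restrict_val _ _ _ (lt_succ_self δ), restrict_val _ _ _ (lt_succ_self δ)]
      cases hb : σ.val δ <;> cases hc : τ.val δ <;> simp_all
    · intro γ hγ
      rw [restrict_val _ _ _ (hγ.trans (lt_succ_self δ)),
        restrict_val _ _ _ (hγ.trans (lt_succ_self δ))]
      exact hag γ hγ
  have hτΓ : τ.restrict (δ + 1) ∈ Γ := hT.tree.downward τ hτ.1 _ hsucc2
  have hcd : a (σ.restrict (δ + 1)) = (a (τ.restrict (δ + 1)))ᶜ := by
    rw [hdag]; exact hT.compl_dagger _ hτΓ ⟨δ, rfl⟩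
  have u1 := hσ.2 δ hsucc1
  have u2 := hτ.2 δ hsucc2
  rw [hcd, compl_compl] at u1
  have hmem := hU.2.1 _ u1 _ u2
  rw [Set.inter_compl_self] at hmem
  exact hU.2.2.2.1 hmem
lemma bddAbove_compat {Γ : Set Node} {a : Node → Set ℕ} (hT : IsTAlgebra Γ a)
    (U : Set (Set ℕ)) : BddAbove (Node.len '' compat Γ a U) := by
  refine ⟨omega1, ?_⟩
  rintro t ⟨σ, hσ, rfl⟩
  exact (hT.tree.lt_omega1 σ hσ.1).le

open Classical in
noncomputable def limNode (Γ : Set Node) (a : Node → Set ℕ) (U : Set (Set ℕ))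
    (hT : IsTAlgebra Γ a) : Node where
  len := sSup (Node.len '' compat Γ a U)
  val := fun α => if ∃ σ ∈ compat Γ a U, σ.val α = true then true else false
  canon := by
    intro α hα
    show (if ∃ σ ∈ compat Γ a U, σ.val α = true then true else false) = false
    rw [if_neg]
    rintro ⟨σ, hσ, hval⟩
    have h1 : α < σ.len := by
      by_contra h
      rw [σ.canon α (not_lt.1 h)] at hval
      exact Bool.false_ne_true hval
    have h2 : σ.len ≤ sSup (Node.len '' compat Γ a U) :=
      le_csSup (bddAbove_compat hT U) ⟨σ, hσ, rfl⟩
    exact absurd (h1.trans_le h2) (not_lt.2 hα)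

lemma limNode_val {Γ : Set Node} {a : Node → Set ℕ} {U : Set (Set ℕ)}
    (hT : IsTAlgebra Γ a) (hU : IsUltrafilterOn (BGamma Γ a) U)
    {σ : Node} (hσ : σ ∈ compat Γ a U) {α : Ordinal} (hα : α < σ.len) :
    (limNode Γ a U hT).val α = σ.val α := by
  classical
  show (if ∃ τ ∈ compat Γ a U, τ.val α = true then true else false) = σ.val α
  by_cases h : ∃ τ ∈ compat Γ a U, τ.val α = true
  · rw [if_pos h]
    obtain ⟨τ, hτ, hval⟩ := h
    have hατ : α < τ.len := by
      by_contra hc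
      rw [τ.canon α (not_lt.1 hc)] at hval
      exact Bool.false_ne_true hval
    rw [← hval]
    exact (compat_agree hT hU hσ hτ hα hατ).symm
  · rw [if_neg h]
    cases hv : σ.val α with
    | false => rfl
    | true => exact absurd ⟨σ, hσ, hv⟩ h

lemma limNode_len_gt {Γ : Set Node} {a : Node → Set ℕ} {U : Set (Set ℕ)}
    (hT : IsTAlgebra Γ a) (hU : IsUltrafilterOn (BGamma Γ a) U)
    {σ : Node} (hσ : σ ∈ compat Γ a U) : σ.len < (limNode Γ a U hT).len := by
  obtain ⟨τ, hτ, hlen⟩ := compat_child hT hU hσ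
  have h1 : τ.len ≤ (limNode Γ a U hT).len := le_csSup (bddAbove_compat hT U) ⟨τ, hτ, rfl⟩
  exact lt_of_lt_of_le (by rw [hlen]; exact lt_succ_self σ.len) h1

lemma limNode_exists {Γ : Set Node} {a : Node → Set ℕ} {U : Set (Set ℕ)}
    (hT : IsTAlgebra Γ a) {α : Ordinal} (hα : α < (limNode Γ a U hT).len) :
    ∃ σ ∈ compat Γ a U, α < σ.len := by
  by_cases h : (Node.len '' compat Γ a U).Nonempty
  · obtain ⟨t, ⟨σ, hσ, rfl⟩, hlt⟩ := exists_lt_of_lt_csSup h hα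
    exact ⟨σ, hσ, hlt⟩
  · exfalso
    have he : Node.len '' compat Γ a U = ∅ := Set.not_nonempty_iff_eq_empty.1 h
    have : (limNode Γ a U hT).len = 0 := by
      show sSup (Node.len '' compat Γ a U) = 0
      rw [he, csSup_empty]
      rfl
    rw [this] at hα
    exact absurd hα (not_lt.2 (zero_le (a := α)))

lemma limNode_restrict {Γ : Set Node} {a : Node → Set ℕ} {U : Set (Set ℕ)}
    (hT : IsTAlgebra Γ a) (hU : IsUltrafilterOn (BGamma Γ a) U)
    {σ : Node} (hσ : σ ∈ compat Γ a U) {β : Ordinal} (hβ : β ≤ σ.len) :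
    (limNode Γ a U hT).restrict β = σ.restrict β := by
  apply node_ext
  · rfl
  · intro α hα
    have hα' : α < β := hα
    rw [restrict_val _ _ _ hα', restrict_val _ _ _ hα']
    exact limNode_val hT hU hσ (hα'.trans_le hβ)

lemma limNode_not_mem {Γ : Set Node} {a : Node → Set ℕ} {U : Set (Set ℕ)}
    (hT : IsTAlgebra Γ a) (hU : IsUltrafilterOn (BGamma Γ a) U) :
    limNode Γ a U hT ∉ Γ := by
  intro hmem
  have hcompat : limNode Γ a U hT ∈ compat Γ a U := by
    refine ⟨hmem, ?_⟩
    intro α hα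
    obtain ⟨σ, hσ, hlt⟩ := limNode_exists hT (lt_of_lt_of_le (lt_succ_self α) hα)
    have h1 : α + 1 ≤ σ.len := succ_le_iff'.2 hlt
    rw [limNode_restrict hT hU hσ h1]
    exact hσ.2 α h1
  exact absurd (limNode_len_gt hT hU hcompat) (lt_irrefl _)

lemma limNode_XGamma {Γ : Set Node} {a : Node → Set ℕ} {U : Set (Set ℕ)}
    (hT : IsTAlgebra Γ a) (hU : IsUltrafilterOn (BGamma Γ a) U) :
    limNode Γ a U hT ∈ XGamma Γ := by
  refine ⟨?_, limNode_not_mem hT hU, ?_⟩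
  · show sSup (Node.len '' compat Γ a U) ≤ omega1
    apply csSup_le'
    rintro t ⟨σ, hσ, rfl⟩
    exact (hT.tree.lt_omega1 σ hσ.1).le
  · intro β hβ
    obtain ⟨σ, hσ, hlt⟩ := limNode_exists hT hβ
    rw [limNode_restrict hT hU hσ hlt.le]
    exact hT.tree.downward σ hσ.1 β hlt.le

lemma limNode_gen {Γ : Set Node} {a : Node → Set ℕ} {U : Set (Set ℕ)}
    (hT : IsTAlgebra Γ a) (hU : IsUltrafilterOn (BGamma Γ a) U)
    {α : Ordinal} (hα : α + 1 ≤ (limNode Γ a U hT).len) :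
    (limNode Γ a U hT).restrict (α + 1) ∈ Γ ∧
      (a ((limNode Γ a U hT).restrict (α + 1)))ᶜ ∈ U := by
  obtain ⟨σ, hσ, hlt⟩ := limNode_exists hT (lt_of_lt_of_le (lt_succ_self α) hα)
  have h1 : α + 1 ≤ σ.len := succ_le_iff'.2 hlt
  rw [limNode_restrict hT hU hσ h1]
  exact ⟨hT.tree.downward σ hσ.1 _ h1, hσ.2 α h1⟩
lemma decide_basic {Γ : Set Node} {a : Node → Set ℕ} (hT : IsTAlgebra Γ a)
    {y : Node} (hyΓ : y ∉ Γ) (hyG : ∀ α, α + 1 ≤ y.len → y.restrict (α + 1) ∈ Γ)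
    {σ : Node} (hσ : σ ∈ Γ) :
    a σ ∈ Ux Γ a y ∨ (a σ)ᶜ ∈ Ux Γ a y := by
  by_cases hs : IsSucc σ.len
  case neg =>
    right
    refine ⟨GenBool.compl _ (GenBool.basic _ ⟨σ, hσ, rfl⟩), ∅, ?_, ?_⟩
    · intro α hα; exact absurd hα (Finset.notMem_empty α)
    · rw [hT.empty_of_not_succ σ hσ hs, Set.compl_empty]
      exact Set.subset_univ _
  case pos =>
  obtain ⟨β, hβ⟩ := hs
  by_cases hcase : ∀ α, α < σ.len → σ.val α = y.val α
  · -- σ is an initial segment of y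
    have hle : σ.len ≤ y.len := by
      by_contra h
      rw [not_le] at h
      have hy : y = σ.restrict y.len := by
        apply node_ext
        · rfl
        · intro α hα
          rw [restrict_val _ _ _ hα]
          exact (hcase α (hα.trans h)).symm
      exact hyΓ (hy ▸ hT.tree.downward σ hσ y.len h.le)
    have hyσ : σ = y.restrict σ.len := by
      apply node_ext
      · rfl
      · intro α hα
        rw [restrict_val _ _ _ hα]
        exact hcase α hα
    right
    refine ⟨GenBool.compl _ (GenBool.basic _ ⟨σ, hσ, rfl⟩), {β}, ?_, ?_⟩
    · intro α hα
      rw [Finset.mem_singleton] at hα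
      subst hα
      rw [← hβ]
      exact hle
    · intro n hn
      have h1 := mem_finInterCompl.1 hn β (Finset.mem_singleton_self β)
      have h2 : y.restrict (β + 1) = σ := by rw [← hβ]; exact hyσ.symm
      rw [h2] at h1
      exact h1
  · -- σ branches off y at δ
    push_neg at hcase
    obtain ⟨α₀, h₀1, h₀2⟩ := hcase
    have hD : {δ : Ordinal | δ < σ.len ∧ σ.val δ ≠ y.val δ}.Nonempty := ⟨α₀, h₀1, h₀2⟩
    set D := {δ : Ordinal | δ < σ.len ∧ σ.val δ ≠ y.val δ} with hDdef
    obtain ⟨hδ1, hδ2⟩ : Ordinal.lt_wf.min D hD ∈ D := Ordinal.lt_wf.min_mem D hD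
    set δ := Ordinal.lt_wf.min D hD with hδdef
    have hag : ∀ γ, γ < δ → γ < σ.len → σ.val γ = y.val γ := by
      intro γ h1 h2
      by_contra hne
      exact Ordinal.lt_wf.not_lt_min D ⟨h2, hne⟩ h1
    have hδy : δ < y.len := by
      by_contra h
      rw [not_lt] at h
      have hy : y = σ.restrict y.len := by
        apply node_ext
        · rfl
        · intro γ hγ
          rw [restrict_val _ _ _ hγ]
          exact (hag γ (hγ.trans_le h) ((hγ.trans_le h).trans hδ1)).symm
      exact hyΓ (hy ▸ hT.tree.downward σ hσ y.len (h.trans hδ1.le))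
    have hδ1' : δ + 1 ≤ σ.len := succ_le_iff'.2 hδ1
    have hδy' : δ + 1 ≤ y.len := succ_le_iff'.2 hδy
    have hyδΓ : y.restrict (δ + 1) ∈ Γ := hyG δ hδy'
    have hdag : σ.restrict (δ + 1) = (y.restrict (δ + 1)).dagger := by
      apply eq_dagger rfl rfl
      · rw [restrict_val _ _ _ (lt_succ_self δ), restrict_val _ _ _ (lt_succ_self δ)]
        cases hb : σ.val δ <;> cases hc : y.val δ <;> simp_all
      · intro γ hγ
        rw [restrict_val _ _ _ (hγ.trans (lt_succ_self δ)),
          restrict_val _ _ _ (hγ.trans (lt_succ_self δ))]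
        exact hag γ hγ (hγ.trans hδ1)
    have hacd : a (σ.restrict (δ + 1)) = (a (y.restrict (δ + 1)))ᶜ := by
      rw [hdag]
      exact hT.compl_dagger _ hyδΓ ⟨δ, rfl⟩
    have hβd : β ∈ branchDomain Γ σ := by
      refine ⟨le_of_eq hβ.symm, ?_⟩
      rw [← hβ, restrict_self]
      exact hσ
    have hδβ : δ ≤ β := lt_succ_iff'.1 (hβ ▸ hδ1)
    obtain ⟨F, hF, hco⟩ := hT.branch_coherent σ (hT.tree.lt_omega1 σ hσ).le δ β hδβ hβd
    have hbs_δ : branchSeq a σ δ = (a (y.restrict (δ + 1)))ᶜ := hacd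
    have hbs_β : branchSeq a σ β = a σ := by
      show a (σ.restrict (β + 1)) = a σ
      rw [← hβ, restrict_self]
    have hFy' : unionFin (branchSeq a σ) F = ⋃ γ ∈ F, a (y.restrict (γ + 1)) := by
      unfold unionFin
      apply Set.iUnion₂_congr
      intro γ hγ
      show a (σ.restrict (γ + 1)) = a (y.restrict (γ + 1))
      have hγδ : γ + 1 ≤ δ := succ_le_iff'.2 (hF γ hγ)
      have heq : σ.restrict (γ + 1) = y.restrict (γ + 1) := by
        apply node_ext
        · rfl
        · intro ε hε
          have hε' : ε < γ + 1 := hε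
          have hεδ : ε < δ := lt_of_lt_of_le hε' hγδ
          rw [restrict_val _ _ _ hε', restrict_val _ _ _ hε']
          exact hag ε hεδ (hεδ.trans hδ1)
      rw [heq]
    have hF'le : ∀ α ∈ insert δ F, α + 1 ≤ y.len := by
      intro α hα
      rcases Finset.mem_insert.1 hα with he | hm
      · subst he; exact hδy'
      · exact succ_le_iff'.2 ((hF α hm).trans hδy)
    have hmemδ : ∀ n, n ∈ finInterCompl a y (insert δ F) → n ∉ a (y.restrict (δ + 1)) :=
      fun n hn => mem_finInterCompl.1 hn δ (Finset.mem_insert_self δ F)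
    have hmemF : ∀ n, n ∈ finInterCompl a y (insert δ F) →
        ∀ γ ∈ F, n ∉ a (y.restrict (γ + 1)) :=
      fun n hn γ hγ => mem_finInterCompl.1 hn γ (Finset.mem_insert_of_mem hγ)
    rw [hbs_δ, hbs_β, hFy'] at hco
    rcases hco with h1 | h2
    · right
      refine ⟨GenBool.compl _ (GenBool.basic _ ⟨σ, hσ, rfl⟩), insert δ F, hF'le, ?_⟩
      intro n hn
      rw [Set.mem_compl_iff]
      intro hnσ
      have hmem : n ∈ (a (y.restrict (δ + 1)))ᶜ ∩ a σ := ⟨hmemδ n hn, hnσ⟩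
      obtain ⟨γ, hγF, hnγ⟩ := Set.mem_iUnion₂.1 (h1 hmem)
      exact hmemF n hn γ hγF hnγ
    · left
      refine ⟨GenBool.basic _ ⟨σ, hσ, rfl⟩, insert δ F, hF'le, ?_⟩
      intro n hn
      have h3 : n ∈ (a (y.restrict (δ + 1)))ᶜ := hmemδ n hn
      rcases h2 h3 with h5 | h5
      · exact h5
      · obtain ⟨γ, hγF, hnγ⟩ := Set.mem_iUnion₂.1 h5
        exact absurd hnγ (hmemF n hn γ hγF)
lemma univ_mem {Γ : Set Node} {a : Node → Set ℕ} {U : Set (Set ℕ)}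
    (hU : IsUltrafilterOn (BGamma Γ a) U) : (Set.univ : Set ℕ) ∈ U := by
  have hB : (Set.univ : Set ℕ) ∈ BGamma Γ a := by
    have := GenBool.compl (G := { s | ∃ σ ∈ Γ, s = a σ }) ∅ GenBool.empty
    rwa [Set.compl_empty] at this
  rcases hU.2.2.2.2 Set.univ hB with ⟨h, _⟩ | ⟨h, _⟩
  · exact h
  · rw [Set.compl_univ] at h
    exact absurd h hU.2.2.2.1

lemma finInter_mem {Γ : Set Node} {a : Node → Set ℕ} {U : Set (Set ℕ)}
    (hU : IsUltrafilterOn (BGamma Γ a) U) {y : Node} :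
    ∀ F : Finset Ordinal, (∀ α ∈ F, (a (y.restrict (α + 1)))ᶜ ∈ U) →
      finInterCompl a y F ∈ U := by
  intro F
  classical
  induction F using Finset.induction with
  | empty =>
    intro _
    have h : finInterCompl a y ∅ = Set.univ := by simp [finInterCompl]
    rw [h]
    exact univ_mem hU
  | @insert α F hα ih =>
    intro hgen
    have h1 : finInterCompl a y (insert α F) =
        (a (y.restrict (α + 1)))ᶜ ∩ finInterCompl a y F := by
      ext n
      simp only [mem_finInterCompl, Set.mem_inter_iff, Finset.mem_insert, Set.mem_compl_iff]
      constructor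
      · intro h
        exact ⟨h α (Or.inl rfl), fun β hβ => h β (Or.inr hβ)⟩
      · rintro ⟨h2, h3⟩ β (rfl | hβ)
        · exact h2
        · exact h3 β hβ
    rw [h1]
    exact hU.2.1 _ (hgen α (Finset.mem_insert_self α F)) _
      (ih fun β hβ => hgen β (Finset.mem_insert_of_mem hβ))

end Stmt4Aux

/-- Every ultrafilter `U` on the Boolean subalgebra `B_Γ` generated by a
`𝕋`-algebra `A_Γ` is of the form `U_y` for some `y ∈ X(Γ)`. -/
theorem stmt4 (Γ : Set Node) (a : Node → Set ℕ) (hT : IsTAlgebra Γ a)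
    (U : Set (Set ℕ)) (hU : IsUltrafilterOn (BGamma Γ a) U) :
    ∃ y ∈ XGamma Γ, U = Ux Γ a y := by
  open Stmt4Aux in
  refine ⟨limNode Γ a U hT, limNode_XGamma hT hU, ?_⟩
  set y := limNode Γ a U hT with hy
  have hyΓ : y ∉ Γ := limNode_not_mem hT hU
  have hyG : ∀ α, α + 1 ≤ y.len → y.restrict (α + 1) ∈ Γ :=
    fun α hα => (limNode_gen hT hU hα).1
  have hyU : ∀ α, α + 1 ≤ y.len → (a (y.restrict (α + 1)))ᶜ ∈ U :=
    fun α hα => (limNode_gen hT hU hα).2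
  -- U_y ⊆ U
  have hsubU : Ux Γ a y ⊆ U := by
    rintro b ⟨hbB, F, hFle, hsub⟩
    exact hU.2.2.1 _ (finInter_mem hU F fun α hα => hyU α (hFle α hα)) b hbB hsub
  -- deciding lemma
  have hdecide : ∀ b : Set ℕ, GenBool { s | ∃ σ ∈ Γ, s = a σ } b →
      b ∈ Ux Γ a y ∨ bᶜ ∈ Ux Γ a y := by
    intro b hb
    induction hb with
    | basic s hs =>
      obtain ⟨σ, hσ, rfl⟩ := hs
      exact decide_basic hT hyΓ hyG hσ
    | empty =>
      right
      refine ⟨GenBool.compl _ GenBool.empty, ∅, ?_, ?_⟩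
      · intro α hα; exact absurd hα (Finset.notMem_empty α)
      · rw [Set.compl_empty]; exact Set.subset_univ _
    | compl s hs ih =>
      rcases ih with h | h
      · right
        rw [compl_compl]
        exact h
      · left
        exact h
    | inter s t hs ht ih1 ih2 =>
      rcases ih1 with h1 | h1
      · rcases ih2 with h2 | h2
        · left
          obtain ⟨hB1, F1, hle1, hsub1⟩ := h1
          obtain ⟨hB2, F2, hle2, hsub2⟩ := h2
          classical
          refine ⟨GenBool.inter s t hs ht, F1 ∪ F2, ?_, ?_⟩
          · intro α hα
            rcases Finset.mem_union.1 hα with h | h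
            · exact hle1 α h
            · exact hle2 α h
          · intro n hn
            have hn1 : n ∈ finInterCompl a y F1 :=
              mem_finInterCompl.2 fun α hα =>
                mem_finInterCompl.1 hn α (Finset.mem_union_left _ hα)
            have hn2 : n ∈ finInterCompl a y F2 :=
              mem_finInterCompl.2 fun α hα =>
                mem_finInterCompl.1 hn α (Finset.mem_union_right _ hα)
            exact ⟨hsub1 hn1, hsub2 hn2⟩
        · right
          obtain ⟨hB2, F2, hle2, hsub2⟩ := h2
          refine ⟨GenBool.compl _ (GenBool.inter s t hs ht), F2, hle2, ?_⟩
          exact hsub2.trans (Set.compl_subset_compl.2 Set.inter_subset_right)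
      · right
        obtain ⟨hB1, F1, hle1, hsub1⟩ := h1
        refine ⟨GenBool.compl _ (GenBool.inter s t hs ht), F1, hle1, ?_⟩
        exact hsub1.trans (Set.compl_subset_compl.2 Set.inter_subset_left)
  apply Set.Subset.antisymm
  · intro b hb
    have hbB : b ∈ BGamma Γ a := hU.1 hb
    rcases hdecide b hbB with h | h
    · exact h
    · exfalso
      have hbc : bᶜ ∈ U := hsubU h
      have hmem := hU.2.1 b hb bᶜ hbc
      rw [Set.inter_compl_self] at hmem
      exact hU.2.2.2.1 hmem
  · exact hsubU

end
end

section
/- Let A_Γ be a T-algebra, fix for each infinite limit ordinal λ < ω₁ a bijection e_λ : ℕ → λ, let π : ℕ → ℕ be a permutation, and let Y ⊆ X(Γ,ℵ₀). If for each y ∈ Y the extension A_Γ[π,y] (built over Γ^y = Γ ∪ {y⌢σ : σ ∈ 2^{<ω}} using e_{λ_y}) is a T-algebra, then A_Γ[π,Y] = ⋃_{y∈Y} A_Γ[π,y] is a T-algebra on Γ^Y = ⋃_{y∈Y} Γ^y. -/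
open Set

noncomputable section

/-- If for each `y` in a set `Y ⊆ X(Γ,ℵ₀)` of countable maximal branches the
extension `A_Γ[π,y]` is a `𝕋`-algebra, then `A_Γ[π,Y] = ⋃_{y∈Y} A_Γ[π,y]` is a
`𝕋`-algebra on `Γ^Y = ⋃_{y∈Y} Γ^y`. -/
theorem stmt14 (Γ : Set Node) (a : Node → Set ℕ) (hT : IsTAlgebra Γ a)
    (e : ℕ → Node) (he : IsStdEnum e)
    (π : ℕ → ℕ) (hπ : Function.Bijective π)
    (eb : Ordinal → ℕ → Ordinal)
    (heb : ∀ lam : Ordinal, Ordinal.omega0 ≤ lam → lam < omega1 → Order.IsSuccLimit lam →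
      Function.Injective (eb lam) ∧ (∀ n, eb lam n < lam) ∧ ∀ α < lam, ∃ n, eb lam n = α)
    (Y : Set Node) (hY : Y ⊆ XGamma Γ) (hYcount : ∀ y ∈ Y, y.len < omega1)
    (a' : Node → Set ℕ) (haΓ : ∀ σ ∈ Γ, a' σ = a σ)
    (heq : ∀ y ∈ Y, ExtEquations e π a y (eb y.len) a')
    (hext : ∀ y ∈ Y, IsTAlgebra (Γ ∪ appendSet y) a') :
    IsTAlgebra (⋃ y ∈ Y, (Γ ∪ appendSet y)) a' := by
  constructor
  · constructor
    · intro σ hσ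
      obtain ⟨y, hy, hσy⟩ := Set.mem_iUnion₂.1 hσ
      exact (hext y hy).tree.lt_omega1 σ hσy
    · intro σ hσ β hβ
      obtain ⟨y, hy, hσy⟩ := Set.mem_iUnion₂.1 hσ
      exact Set.mem_iUnion₂.2 ⟨y, hy, (hext y hy).tree.downward σ hσy β hβ⟩
    · intro σ hσ
      obtain ⟨y, hy, hσy⟩ := Set.mem_iUnion₂.1 hσ
      exact Set.mem_iUnion₂.2 ⟨y, hy, (hext y hy).tree.twinned σ hσy⟩
    · intro σ hσ
      obtain ⟨y, hy, hσy⟩ := Set.mem_iUnion₂.1 hσ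
      obtain ⟨τ, hτ, h1, h2⟩ := (hext y hy).tree.noMax σ hσy
      exact ⟨τ, Set.mem_iUnion₂.2 ⟨y, hy, hτ⟩, h1, h2⟩
  · intro σ hσ hns
    obtain ⟨y, hy, hσy⟩ := Set.mem_iUnion₂.1 hσ
    exact (hext y hy).empty_of_not_succ σ hσy hns
  · intro σ hσ hs
    obtain ⟨y, hy, hσy⟩ := Set.mem_iUnion₂.1 hσ
    exact (hext y hy).compl_dagger σ hσy hs
  · intro x hx α β hab hβ
    obtain ⟨h1, h2⟩ := hβ
    obtain ⟨y, hy, hσy⟩ := Set.mem_iUnion₂.1 h2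
    exact (hext y hy).branch_coherent x hx α β hab ⟨h1, hσy⟩
  · intro x hx β hβ
    obtain ⟨h1, h2⟩ := hβ
    obtain ⟨y, hy, hσy⟩ := Set.mem_iUnion₂.1 h2
    exact (hext y hy).branch_proper x hx β ⟨h1, hσy⟩

end
end
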